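/- Let z̄ be B-stationary for min f(z) s.t. P(z) ∈ D (with f, P continuously differentiable, D closed), assume GGCQ holds at z̄ and the mapping u ⇉ ∇P(z̄)u − T_D(P(z̄)) is metrically subregular at (0,0). Then at least one of the following holds: (i) there exist w ∈ T_D(P(z̄)) and w* ∈ N̂_{T_D(P(z̄))}(w) with ∇f(z̄) + ∇P(z̄)* w* = 0; or (ii) there exists ū with ∇P(z̄)ū ∈ T_D(P(z̄)), ∇P(z̄)ū ∉ Lsp(T_D(P(z̄))), ⟨∇f(z̄), ū⟩ = 0, 0 ∈ ∇f(z̄) + N̂_{T^lin(z̄)}(ū), and T_D(P(z̄)) is not locally polyhedral near ∇P(z̄)ū. -/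

import Mathlib

open Set Filter Topology Metric Pointwise

noncomputable section

abbrev Rd (d : ℕ) := EuclideanSpace ℝ (Fin d)

/-- Tangent (contingent) cone: w such that ∃ t_k ↓ 0, w_k → w with z + t_k w_k ∈ Ω. -/
def tangentConeSeq {E : Type*} [NormedAddCommGroup E] [NormedSpace ℝ E]
    (Ω : Set E) (z : E) : Set E :=
  {w | ∃ t : ℕ → ℝ, ∃ wk : ℕ → E,
    (∀ k, 0 < t k) ∧ Tendsto t atTop (nhds 0) ∧
    Tendsto wk atTop (nhds w) ∧ ∀ k, z + t k • wk k ∈ Ω}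

/-- Regular (Fréchet) normal cone: polar of the tangent cone (empty outside Ω). -/
def regNormal {E : Type*} [NormedAddCommGroup E] [InnerProductSpace ℝ E]
    (Ω : Set E) (z : E) : Set E :=
  {v | z ∈ Ω ∧ ∀ w ∈ tangentConeSeq Ω z, (inner ℝ v w : ℝ) ≤ 0}

/-- Limiting (Mordukhovich) normal cone. -/
def limNormal {E : Type*} [NormedAddCommGroup E] [InnerProductSpace ℝ E]
    (Ω : Set E) (z : E) : Set E :=
  {v | ∃ zk vk : ℕ → E, (∀ k, zk k ∈ Ω) ∧ (∀ k, vk k ∈ regNormal Ω (zk k)) ∧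
    Tendsto zk atTop (nhds z) ∧ Tendsto vk atTop (nhds v)}

/-- Polar cone of a set. -/
def polarCone {E : Type*} [NormedAddCommGroup E] [InnerProductSpace ℝ E]
    (K : Set E) : Set E :=
  {v | ∀ w ∈ K, (inner ℝ v w : ℝ) ≤ 0}

/-- Lsp(C): largest subspace L with C + L ⊆ C (the union of all such subspaces). -/
def Lsp {E : Type*} [NormedAddCommGroup E] [NormedSpace ℝ E] (C : Set E) : Set E :=
  {l | ∃ L : Submodule ℝ E, (∀ c ∈ C, ∀ x ∈ L, c + x ∈ C) ∧ l ∈ L}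

/-- A cone: closed under multiplication by nonnegative scalars. -/
def IsCone {E : Type*} [NormedAddCommGroup E] [NormedSpace ℝ E] (C : Set E) : Prop :=
  ∀ c ∈ C, ∀ t : ℝ, 0 ≤ t → t • c ∈ C

/-- Metric subregularity of a set-valued map M at (z, w) ∈ Gr M. -/
def MetricallySubregular {E F : Type*} [NormedAddCommGroup E] [NormedSpace ℝ E]
    [NormedAddCommGroup F] [NormedSpace ℝ F] (M : E → Set F) (z : E) (w : F) : Prop :=
  w ∈ M z ∧ ∃ κ > (0:ℝ), ∃ U ∈ nhds z, ∀ z' ∈ U,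
    infDist z' {x | w ∈ M x} ≤ κ * infDist w (M z')

/-- Convex polyhedral: finite intersection of closed halfspaces. -/
def IsConvexPolyhedral {E : Type*} [NormedAddCommGroup E] [NormedSpace ℝ E]
    (C : Set E) : Prop :=
  ∃ (n : ℕ) (a : Fin n → (E →L[ℝ] ℝ)) (α : Fin n → ℝ), C = {z | ∀ i, a i z ≤ α i}

/-- Polyhedral: finite union of convex polyhedral sets. -/
def IsPolyhedral {E : Type*} [NormedAddCommGroup E] [NormedSpace ℝ E]
    (C : Set E) : Prop :=
  ∃ (n : ℕ) (Ci : Fin n → Set E), (∀ i, IsConvexPolyhedral (Ci i)) ∧ C = ⋃ i, Ci i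

/-- Locally polyhedral near a point. -/
def LocallyPolyhedral {E : Type*} [NormedAddCommGroup E] [NormedSpace ℝ E]
    (Ω : Set E) (z : E) : Prop :=
  ∃ W ∈ nhds z, ∃ C : Set E, IsPolyhedral C ∧ Ω ∩ W = C ∩ W

/-- Normal cone of convex analysis. -/
def convNormal {E : Type*} [NormedAddCommGroup E] [InnerProductSpace ℝ E]
    (K : Set E) (v : E) : Set E :=
  {z | v ∈ K ∧ ∀ w ∈ K, (inner ℝ z (w - v) : ℝ) ≤ 0}

/-- Regular normal cone for subsets of a product of inner ℝ product spaces
(with the natural product inner ℝ product in the pairing). -/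
def regNormal2 {E F : Type*} [NormedAddCommGroup E] [InnerProductSpace ℝ E]
    [NormedAddCommGroup F] [InnerProductSpace ℝ F] (Ω : Set (E × F)) (z : E × F) :
    Set (E × F) :=
  {v | z ∈ Ω ∧ ∀ w ∈ tangentConeSeq Ω z,
    (inner ℝ v.1 w.1 : ℝ) + (inner ℝ v.2 w.2 : ℝ) ≤ 0}

/-- Iterated tangent cones: the head of the list is the most recent direction,
so `iterTangent D y [vₗ, …, v₁] = T^{l}_D(y; v₁,…,vₗ)`. -/
def iterTangent {E : Type*} [NormedAddCommGroup E] [NormedSpace ℝ E]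
    (D : Set E) (y : E) : List E → Set E
  | [] => tangentConeSeq D y
  | v :: vs => tangentConeSeq (iterTangent D y vs) v
/-! ### Part 1: tangent cone basics -/
section TCS
variable {E : Type*} [NormedAddCommGroup E] [NormedSpace ℝ E]

lemma tcs_zero_mem {S : Set E} {x : E} (hx : x ∈ S) : (0:E) ∈ tangentConeSeq S x :=
  ⟨fun k => 1/((k:ℝ)+1), fun _ => 0, fun k => by positivity,
    tendsto_one_div_add_atTop_nhds_zero_nat, tendsto_const_nhds, fun k => by simpa using hx⟩

lemma tcs_smul_mem {S : Set E} {x w : E} {c : ℝ} (hc : 0 < c) (hw : w ∈ tangentConeSeq S x) :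
    c • w ∈ tangentConeSeq S x := by
  obtain ⟨t, wk, ht0, htl, hwl, hm⟩ := hw
  refine ⟨fun k => t k / c, fun k => c • wk k, fun k => div_pos (ht0 k) hc, ?_, ?_, fun k => ?_⟩
  · simpa using htl.div_const c
  · exact hwl.const_smul c
  · have h : (t k / c) • (c • wk k) = t k • wk k := by
      rw [smul_smul]; congr 1; field_simp
    rw [h]; exact hm k

lemma tcs_mono {S T : Set E} (h : S ⊆ T) (x : E) : tangentConeSeq S x ⊆ tangentConeSeq T x := by
  rintro w ⟨t, wk, a, b, c, d⟩
  exact ⟨t, wk, a, b, c, fun k => h (d k)⟩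

lemma subset_tcs_zero {C : Set E} (hC : ∀ x ∈ C, ∀ c : ℝ, 0 < c → c • x ∈ C) :
    C ⊆ tangentConeSeq C 0 := by
  intro u hu
  refine ⟨fun k => 1/((k:ℝ)+1), fun _ => u, fun k => by positivity,
    tendsto_one_div_add_atTop_nhds_zero_nat, tendsto_const_nhds, fun k => ?_⟩
  rw [zero_add]; exact hC u hu _ (by positivity)

lemma tcs_zero_subset {C : Set E} (hcl : IsClosed C)
    (hC : ∀ x ∈ C, ∀ c : ℝ, 0 < c → c • x ∈ C) : tangentConeSeq C 0 ⊆ C := by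
  rintro u ⟨t, wk, ht0, htl, hwl, hm⟩
  have hmem : ∀ k, wk k ∈ C := by
    intro k
    have h1 := hm k; rw [zero_add] at h1
    have h2 := hC _ h1 (t k)⁻¹ (by have := ht0 k; positivity)
    rwa [smul_smul, inv_mul_cancel₀ (ne_of_gt (ht0 k)), one_smul] at h2
  exact hcl.mem_of_tendsto hwl (Eventually.of_forall hmem)

lemma tcs_of_eventually {S : Set E} {x w : E} {t : ℕ → ℝ} {wk : ℕ → E}
    (htl : Tendsto t atTop (nhds 0)) (hwl : Tendsto wk atTop (nhds w))
    (h : ∀ᶠ k in atTop, 0 < t k ∧ x + t k • wk k ∈ S) : w ∈ tangentConeSeq S x := by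
  obtain ⟨N, hN⟩ := eventually_atTop.1 h
  exact ⟨fun k => t (k+N), fun k => wk (k+N), fun k => (hN _ (Nat.le_add_left N k)).1,
    htl.comp (tendsto_add_atTop_nat N), hwl.comp (tendsto_add_atTop_nat N),
    fun k => (hN _ (Nat.le_add_left N k)).2⟩

lemma tcs_subset_of_local {S T : Set E} {x : E} {ε : ℝ} (hε : 0 < ε)
    (h : S ∩ ball x ε ⊆ T) : tangentConeSeq S x ⊆ tangentConeSeq T x := by
  rintro w ⟨t, wk, ht0, htl, hwl, hm⟩
  apply tcs_of_eventually htl hwl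
  have hb : Tendsto (fun k => ‖t k • wk k‖) atTop (nhds 0) := by
    have h1 : Tendsto (fun k => t k • wk k) atTop (nhds ((0:ℝ) • w)) := htl.smul hwl
    rw [zero_smul] at h1
    simpa using h1.norm
  filter_upwards [hb.eventually_lt_const hε] with k hk
  refine ⟨ht0 k, h ⟨hm k, ?_⟩⟩
  simpa [dist_eq_norm, add_sub_cancel_left] using hk

lemma tcs_congr_local {S T : Set E} {x : E} {ε : ℝ} (hε : 0 < ε)
    (h : S ∩ ball x ε = T ∩ ball x ε) : tangentConeSeq S x = tangentConeSeq T x := by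
  apply le_antisymm
  · exact tcs_subset_of_local hε (h ▸ inter_subset_left)
  · exact tcs_subset_of_local hε (h ▸ inter_subset_left)

lemma tcs_shift {T : Set E} (v x : E) :
    tangentConeSeq {y | y - v ∈ T} (v + x) = tangentConeSeq T x := by
  ext w
  constructor <;> rintro ⟨t, wk, ht0, htl, hwl, hm⟩ <;> refine ⟨t, wk, ht0, htl, hwl, fun k => ?_⟩
  · have h1 := hm k
    have h2 : v + x + t k • wk k - v = x + t k • wk k := by abel
    rwa [Set.mem_setOf_eq, h2] at h1
  · show v + x + t k • wk k - v ∈ T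
    have h2 : v + x + t k • wk k - v = x + t k • wk k := by abel
    rw [h2]; exact hm k

lemma tcs_cone_base_smul {C : Set E} (hC : ∀ x ∈ C, ∀ c : ℝ, 0 < c → c • x ∈ C)
    {x : E} {c : ℝ} (hc : 0 < c) :
    tangentConeSeq C (c • x) = tangentConeSeq C x := by
  have aux : ∀ (y : E) (d : ℝ), 0 < d →
      tangentConeSeq C y ⊆ tangentConeSeq C (d • y) := by
    rintro y d hd w ⟨t, wk, ht0, htl, hwl, hm⟩
    refine ⟨fun k => d * t k, wk, fun k => mul_pos hd (ht0 k), ?_, hwl, fun k => ?_⟩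
    · simpa using htl.const_mul d
    · have h : d • y + (d * t k) • wk k = d • (y + t k • wk k) := by
        rw [smul_add, smul_smul]
      rw [h]; exact hC _ (hm k) d hd
  apply le_antisymm
  · intro w hw
    have h1 := aux (c • x) c⁻¹ (by positivity) hw
    rwa [smul_smul, inv_mul_cancel₀ (ne_of_gt hc), one_smul] at h1
  · exact aux x c hc

lemma tcs_add_smul_base {C : Set E} (hC : ∀ x ∈ C, ∀ c : ℝ, 0 < c → c • x ∈ C)
    {x u : E} (hu : u ∈ tangentConeSeq C x) (c : ℝ) :
    u + c • x ∈ tangentConeSeq C x := by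
  obtain ⟨t, wk, ht0, htl, hwl, hm⟩ := hu
  have hg : Tendsto (fun k => 1 + c * t k) atTop (nhds 1) := by
    have h1 : Tendsto (fun k => c * t k) atTop (nhds 0) := by simpa using htl.const_mul c
    simpa using (tendsto_const_nhds (x := (1:ℝ))).add h1
  have hwl' : Tendsto (fun k => wk k + c • x + (c * t k) • wk k) atTop (nhds (u + c • x)) := by
    have h1 : Tendsto (fun k => (c * t k) • wk k) atTop (nhds ((0:ℝ) • u)) :=
      (by simpa using htl.const_mul c : Tendsto (fun k => c * t k) atTop (nhds (0:ℝ))).smul hwl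
    rw [zero_smul] at h1
    simpa using ((hwl.add_const (c • x)).add h1)
  apply tcs_of_eventually htl hwl'
  filter_upwards [hg.eventually_const_lt (by norm_num : (0:ℝ) < 1)] with k hk
  refine ⟨ht0 k, ?_⟩
  have heq : x + t k • (wk k + c • x + (c * t k) • wk k)
      = (1 + c * t k) • (x + t k • wk k) := by module
  rw [heq]
  exact hC _ (hm k) _ hk

lemma tcs_invariant {C : Set E} {S : Submodule ℝ E} (hinv : ∀ x ∈ C, ∀ s ∈ S, x + s ∈ C)
    {x u : E} (hu : u ∈ tangentConeSeq C x) {s : E} (hs : s ∈ S) :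
    u + s ∈ tangentConeSeq C x := by
  obtain ⟨t, wk, ht0, htl, hwl, hm⟩ := hu
  refine ⟨t, fun k => wk k + s, ht0, htl, hwl.add_const s, fun k => ?_⟩
  have h : x + t k • (wk k + s) = (x + t k • wk k) + t k • s := by module
  rw [h]; exact hinv _ (hm k) _ (S.smul_mem _ hs)

lemma tcs_isClosed (S : Set E) (x : E) : IsClosed (tangentConeSeq S x) := by
  rw [← isSeqClosed_iff_isClosed]
  intro ws w hws hlim
  choose t wk ht0 htl hwl hm using hws
  have key : ∀ m : ℕ, ∃ k, t m k < 1/((m:ℝ)+1) ∧ dist (wk m k) (ws m) < 1/((m:ℝ)+1) := by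
    intro m
    have h1 : ∀ᶠ k in atTop, t m k < 1/((m:ℝ)+1) :=
      (htl m).eventually_lt_const (by positivity)
    have h2 : ∀ᶠ k in atTop, dist (wk m k) (ws m) < 1/((m:ℝ)+1) :=
      (hwl m).eventually (Metric.ball_mem_nhds _ (by positivity))
    exact ((h1.and h2).exists)
  choose k hk1 hk2 using key
  refine ⟨fun m => t m (k m), fun m => wk m (k m), fun m => ht0 m (k m), ?_, ?_,
    fun m => hm m (k m)⟩
  · apply squeeze_zero (fun m => le_of_lt (ht0 m (k m))) (fun m => le_of_lt (hk1 m))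
      tendsto_one_div_add_atTop_nhds_zero_nat
  · rw [tendsto_iff_dist_tendsto_zero]
    apply squeeze_zero (fun m => dist_nonneg) (g := fun m : ℕ => 1/((m:ℝ)+1) + dist (ws m) w)
    · intro m
      calc dist (wk m (k m)) w ≤ dist (wk m (k m)) (ws m) + dist (ws m) w := dist_triangle _ _ _
        _ ≤ 1/((m:ℝ)+1) + dist (ws m) w := by linarith [hk2 m]
    · have h2 : Tendsto (fun m => dist (ws m) w) atTop (nhds 0) :=
        tendsto_iff_dist_tendsto_zero.1 hlim
      simpa using tendsto_one_div_add_atTop_nhds_zero_nat.add h2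

end TCS

/-! ### Part 2: polyhedral sets -/
section Poly
variable {E : Type*} [NormedAddCommGroup E] [NormedSpace ℝ E]

lemma IsConvexPolyhedral.isClosed' {C : Set E} (h : IsConvexPolyhedral C) : IsClosed C := by
  obtain ⟨n, a, α, rfl⟩ := h
  have heq : {z : E | ∀ i, a i z ≤ α i} = ⋂ i, {z | a i z ≤ α i} := by ext; simp
  rw [heq]
  exact isClosed_iInter (fun i => isClosed_le (a i).continuous continuous_const)

lemma IsPolyhedral.isClosed' {C : Set E} (h : IsPolyhedral C) : IsClosed C := by
  obtain ⟨n, Ci, hCi, rfl⟩ := h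
  exact isClosed_iUnion_of_finite (fun i => (hCi i).isClosed')

lemma exists_pos_min_finset {ι : Type*} [DecidableEq ι] (s : Finset ι) (ε : ι → ℝ) :
    (∀ i ∈ s, 0 < ε i) → ∃ δ > 0, ∀ i ∈ s, δ ≤ ε i := by
  induction s using Finset.induction_on with
  | empty => exact fun _ => ⟨1, one_pos, by simp⟩
  | @insert a s ha ih =>
    intro h
    obtain ⟨δ, hδ, hδ2⟩ := ih (fun i hi => h i (Finset.mem_insert_of_mem hi))
    refine ⟨min δ (ε a), lt_min hδ (h a (Finset.mem_insert_self a s)), fun i hi => ?_⟩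
    rcases Finset.mem_insert.1 hi with rfl | hi
    · exact min_le_right _ _
    · exact le_trans (min_le_left _ _) (hδ2 i hi)

/-- The cone of active constraints. -/
def actCone {n : ℕ} (a : Fin n → (E →L[ℝ] ℝ)) (α : Fin n → ℝ) (v : E) : Set E :=
  {u | ∀ j, a j v = α j → a j u ≤ 0}

lemma actCone_cone {n : ℕ} (a : Fin n → (E →L[ℝ] ℝ)) (α : Fin n → ℝ) (v : E) :
    ∀ x ∈ actCone a α v, ∀ c : ℝ, 0 < c → c • x ∈ actCone a α v := by
  intro x hx c hc j hj
  rw [map_smul]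
  have := hx j hj
  simp only [smul_eq_mul]
  exact mul_nonpos_of_nonneg_of_nonpos (le_of_lt hc) this

lemma actCone_poly {n : ℕ} (a : Fin n → (E →L[ℝ] ℝ)) (α : Fin n → ℝ) (v : E) :
    IsConvexPolyhedral (actCone a α v) := by
  classical
  refine ⟨n, fun j => if a j v = α j then a j else 0, fun _ => 0, ?_⟩
  ext u
  constructor
  · intro hu j
    show (if a j v = α j then a j else 0) u ≤ 0
    by_cases h : a j v = α j
    · rw [if_pos h]; exact hu j h
    · rw [if_neg h]; simp
  · intro hu j hj
    have h2 : (if a j v = α j then a j else 0) u ≤ 0 := hu j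
    rwa [if_pos hj] at h2

lemma sub_mem_actCone {n₁ : ℕ} {a : Fin n₁ → E →L[ℝ] ℝ} {α : Fin n₁ → ℝ} {v x : E}
    (hx : ∀ j, a j x ≤ α j) : x - v ∈ actCone a α v := by
  intro j hj
  rw [map_sub, hj]
  linarith [hx j]

lemma exists_eps_actCone {n₁ : ℕ} (a : Fin n₁ → E →L[ℝ] ℝ) (α : Fin n₁ → ℝ) (v : E)
    (hv : ∀ j, a j v ≤ α j) :
    ∃ ε > 0, ∀ u ∈ actCone a α v, ‖u‖ < ε → ∀ j, a j (v + u) ≤ α j := by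
  have hev : ∀ᶠ y in nhds v, ∀ j, (a j v < α j → a j y < α j) := by
    rw [eventually_all]
    intro j
    by_cases h : a j v < α j
    · have hc : Tendsto (a j) (nhds v) (nhds (a j v)) := (a j).continuous.tendsto v
      filter_upwards [hc.eventually_lt_const h] with y hy
      exact fun _ => hy
    · filter_upwards with y
      exact fun hy => absurd hy h
  rw [Metric.eventually_nhds_iff_ball] at hev
  obtain ⟨ε, hε, hball⟩ := hev
  refine ⟨ε, hε, fun u hu hnorm j => ?_⟩
  rcases eq_or_lt_of_le (hv j) with heq | hlt
  · have h1 := hu j heq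
    rw [map_add]
    linarith
  · have hmem : v + u ∈ ball v ε := by
      simpa [mem_ball, dist_eq_norm, add_sub_cancel_left] using hnorm
    linarith [hball (v + u) hmem j hlt]

lemma tcs_convexPoly {n₁ : ℕ} (a : Fin n₁ → E →L[ℝ] ℝ) (α : Fin n₁ → ℝ) (v : E)
    (hv : ∀ j, a j v ≤ α j) :
    tangentConeSeq {x : E | ∀ j, a j x ≤ α j} v = actCone a α v := by
  apply le_antisymm
  · rintro u ⟨t, wk, ht0, htl, hwl, hm⟩ j hj
    have h1 : ∀ k, a j (wk k) ≤ 0 := by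
      intro k
      have h2 := hm k j
      rw [map_add, map_smul, smul_eq_mul] at h2
      rw [hj] at h2
      nlinarith [ht0 k]
    have hc : Tendsto (fun k => a j (wk k)) atTop (nhds (a j u)) :=
      ((a j).continuous.tendsto u).comp hwl
    exact le_of_tendsto hc (Eventually.of_forall h1)
  · intro u hu
    obtain ⟨ε, hε, hloc⟩ := exists_eps_actCone a α v hv
    refine ⟨fun k => (ε/(‖u‖+1)) * (1/((k:ℝ)+1)), fun _ => u,
      fun k => by positivity, ?_, tendsto_const_nhds, fun k => ?_⟩
    · simpa using tendsto_one_div_add_atTop_nhds_zero_nat.const_mul (ε/(‖u‖+1))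
    · show v + _ • u ∈ {x : E | ∀ j, a j x ≤ α j}
      have hpos : (0:ℝ) < (ε/(‖u‖+1)) * (1/((k:ℝ)+1)) := by positivity
      apply hloc _ (actCone_cone a α v u hu _ hpos)
      rw [norm_smul, Real.norm_eq_abs, abs_of_pos hpos]
      have hk1 : 1/((k:ℝ)+1) ≤ 1 := by
        rw [div_le_one (by positivity)]
        simp
      have hn : ‖u‖ < ‖u‖ + 1 := by linarith
      calc (ε/(‖u‖+1)) * (1/((k:ℝ)+1)) * ‖u‖ ≤ (ε/(‖u‖+1)) * 1 * ‖u‖ := by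
            apply mul_le_mul_of_nonneg_right _ (norm_nonneg u)
            apply mul_le_mul_of_nonneg_left hk1 (by positivity)
        _ = ε * (‖u‖ / (‖u‖+1)) := by ring
        _ < ε * 1 := by
            apply mul_lt_mul_of_pos_left _ hε
            rw [div_lt_one (by positivity)]
            exact hn
        _ = ε := mul_one ε

/-- Local conicity + polyhedrality of the tangent cone at a point where a set
is locally polyhedral. -/
lemma locallyPolyhedral_conic {K : Set E} {v : E} (hv : v ∈ K) (hLP : LocallyPolyhedral K v) :
    ∃ ε > 0, (K ∩ ball v ε = {y | y - v ∈ tangentConeSeq K v} ∩ ball v ε)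
      ∧ IsPolyhedral (tangentConeSeq K v) := by
  classical
  obtain ⟨W, hW, C, ⟨n, Ci, hCi, rfl⟩, hKW⟩ := hLP
  obtain ⟨ε₀, hε₀, hball₀⟩ := Metric.mem_nhds_iff.1 hW
  choose ni ai αi hrep using hCi
  -- v belongs to some Ci
  have hvC : v ∈ ⋃ i, Ci i := by
    have h1 : v ∈ K ∩ W := ⟨hv, mem_of_mem_nhds hW⟩
    rw [hKW] at h1
    exact h1.1
  obtain ⟨i₀, hi₀⟩ := mem_iUnion.1 hvC
  -- avoid inactive pieces
  set Bad : Set E := ⋃ i, (if v ∈ Ci i then (∅:Set E) else Ci i) with hBad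
  have hBadClosed : IsClosed Bad := by
    apply isClosed_iUnion_of_finite
    intro i
    by_cases h : v ∈ Ci i
    · rw [if_pos h]; exact isClosed_empty
    · rw [if_neg h]; rw [hrep i]
      exact IsConvexPolyhedral.isClosed' ⟨ni i, ai i, αi i, rfl⟩
  have hvBad : v ∉ Bad := by
    intro hmem
    obtain ⟨i, hi⟩ := mem_iUnion.1 hmem
    by_cases h : v ∈ Ci i
    · rw [if_pos h] at hi; exact hi
    · rw [if_neg h] at hi; exact h hi
  obtain ⟨ε₁, hε₁, hball₁⟩ := Metric.mem_nhds_iff.1 (hBadClosed.isOpen_compl.mem_nhds hvBad)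
  -- per-piece conic radius
  have hEA : ∀ i : Fin n, ∃ ε > 0, v ∈ Ci i →
      ∀ u ∈ actCone (ai i) (αi i) v, ‖u‖ < ε → v + u ∈ Ci i := by
    intro i
    by_cases h : v ∈ Ci i
    · have hvi : ∀ j, ai i j v ≤ αi i j := by
        have := h; rw [hrep i] at this; exact this
      obtain ⟨ε, hε, hloc⟩ := exists_eps_actCone (ai i) (αi i) v hvi
      exact ⟨ε, hε, fun _ u hu hn => by rw [hrep i]; exact hloc u hu hn⟩
    · exact ⟨1, one_pos, fun h' => absurd h' h⟩
  choose εa hεa hconic using hEA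
  obtain ⟨δ, hδ, hδle⟩ := exists_pos_min_finset Finset.univ εa (fun i _ => hεa i)
  set ε := min (min ε₀ ε₁) δ with hεdef
  have hεpos : 0 < ε := lt_min (lt_min hε₀ hε₁) hδ
  -- the candidate tangent cone
  set Tfam : Fin n → Set E := fun i =>
    if v ∈ Ci i then actCone (ai i) (αi i) v else actCone (ai i₀) (αi i₀) v with hTfam
  set T : Set E := ⋃ i, Tfam i with hT
  have hTpoly : IsPolyhedral T := by
    refine ⟨n, Tfam, fun i => ?_, rfl⟩
    by_cases h : v ∈ Ci i
    · rw [hTfam]; simp only [if_pos h]; exact actCone_poly _ _ _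
    · rw [hTfam]; simp only [if_neg h]; exact actCone_poly _ _ _
  have hTcone : ∀ x ∈ T, ∀ c : ℝ, 0 < c → c • x ∈ T := by
    intro x hx c hc
    obtain ⟨i, hi⟩ := mem_iUnion.1 hx
    apply mem_iUnion.2 ⟨i, ?_⟩
    by_cases h : v ∈ Ci i
    · simp only [hTfam, if_pos h] at hi ⊢; exact actCone_cone _ _ _ x hi c hc
    · simp only [hTfam, if_neg h] at hi ⊢; exact actCone_cone _ _ _ x hi c hc
  have hTclosed : IsClosed T := by
    apply isClosed_iUnion_of_finite
    intro i
    by_cases h : v ∈ Ci i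
    · simp only [hTfam, if_pos h]; exact (actCone_poly _ _ _).isClosed'
    · simp only [hTfam, if_neg h]; exact (actCone_poly _ _ _).isClosed'
  -- the key local set equality
  have hSetEq : K ∩ ball v ε = {y | y - v ∈ T} ∩ ball v ε := by
    ext x
    constructor
    · rintro ⟨hxK, hxb⟩
      have hxb₀ : x ∈ ball v ε₀ := mem_of_mem_of_subset hxb
        (ball_subset_ball (le_trans (min_le_left _ _) (min_le_left _ _)))
      have hxb₁ : x ∈ ball v ε₁ := mem_of_mem_of_subset hxb
        (ball_subset_ball (le_trans (min_le_left _ _) (min_le_right _ _)))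
      have hxC : x ∈ ⋃ i, Ci i := by
        have h1 : x ∈ K ∩ W := ⟨hxK, hball₀ hxb₀⟩
        rw [hKW] at h1
        exact h1.1
      obtain ⟨i, hi⟩ := mem_iUnion.1 hxC
      have hact : v ∈ Ci i := by
        by_contra hbad
        have : x ∈ Bad := mem_iUnion.2 ⟨i, by rw [if_neg hbad]; exact hi⟩
        exact (hball₁ hxb₁) this
      refine ⟨mem_iUnion.2 ⟨i, ?_⟩, hxb⟩
      simp only [hTfam, if_pos hact]
      have hxi : ∀ j, ai i j x ≤ αi i j := by
        have := hi; rw [hrep i] at this; exact this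
      exact sub_mem_actCone hxi
    · rintro ⟨hxT, hxb⟩
      obtain ⟨i, hi⟩ := mem_iUnion.1 hxT
      have hnorm : ‖x - v‖ < ε := by
        rw [← dist_eq_norm]
        exact mem_ball.1 hxb
      have hkey : ∃ i', v ∈ Ci i' ∧ x - v ∈ actCone (ai i') (αi i') v := by
        by_cases h : v ∈ Ci i
        · exact ⟨i, h, by simpa only [hTfam, if_pos h] using hi⟩
        · exact ⟨i₀, hi₀, by simpa only [hTfam, if_neg h] using hi⟩
      obtain ⟨i', hact', hmem'⟩ := hkey
      have hxCi : x ∈ Ci i' := by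
        have h1 := hconic i' hact' (x - v) hmem'
          (lt_of_lt_of_le hnorm (le_trans (min_le_right _ _) (hδle i' (Finset.mem_univ i'))))
        rwa [add_sub_cancel] at h1
      have hxW : x ∈ W := hball₀ (mem_of_mem_of_subset hxb
        (ball_subset_ball (le_trans (min_le_left _ _) (min_le_left _ _))))
      have hxK : x ∈ K ∩ W := by
        rw [hKW]
        exact ⟨mem_iUnion.2 ⟨i', hxCi⟩, hxW⟩
      exact ⟨hxK.1, hxb⟩
  -- identify T with the tangent cone
  have hTtcs : tangentConeSeq K v = T := by
    have h1 : tangentConeSeq K v = tangentConeSeq {y | y - v ∈ T} v :=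
      tcs_congr_local hεpos hSetEq
    have h2 : tangentConeSeq {y | y - v ∈ T} v = tangentConeSeq T 0 := by
      have := tcs_shift (T := T) v 0
      rwa [add_zero] at this
    rw [h1, h2]
    exact le_antisymm (tcs_zero_subset hTclosed hTcone) (subset_tcs_zero hTcone)
  rw [hTtcs]
  exact ⟨ε, hεpos, hSetEq, hTpoly⟩

end Poly

/-! ### Part 3: projections, adjoints, infDist -/
section Perp
variable {E : Type*} [NormedAddCommGroup E] [InnerProductSpace ℝ E] [FiniteDimensional ℝ E]
variable (L : Submodule ℝ E)

/-- Component orthogonal to `L`. -/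
noncomputable def perpP (x : E) : E := x - (L.orthogonalProjection x : E)

lemma perpP_mem_orth (x : E) : perpP L x ∈ Lᗮ := Submodule.sub_starProjection_mem_orthogonal x

lemma perpP_add (x y : E) : perpP L (x + y) = perpP L x + perpP L y := by
  simp only [perpP, map_add, Submodule.coe_add]
  abel

lemma perpP_smul (c : ℝ) (x : E) : perpP L (c • x) = c • perpP L x := by
  simp only [perpP, map_smul, SetLike.val_smul, smul_sub]

lemma perpP_eq_zero_iff (x : E) : perpP L x = 0 ↔ x ∈ L := by
  rw [perpP, sub_eq_zero, eq_comm]; exact Submodule.starProjection_eq_self_iff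

lemma inner_perpP_of_mem {l : E} (hl : l ∈ L) (x : E) : (inner ℝ (perpP L x) l : ℝ) = 0 := by
  rw [real_inner_comm]
  exact Submodule.inner_right_of_mem_orthogonal hl (perpP_mem_orth L x)

lemma inner_perpP_perpP (x y : E) : (inner ℝ (perpP L x) (perpP L y) : ℝ) = inner ℝ (perpP L x) y := by
  have h1 : (inner ℝ (perpP L x) (y - perpP L y) : ℝ) = 0 := by
    apply inner_perpP_of_mem
    have : y - perpP L y = (L.orthogonalProjection y : E) := by rw [perpP]; abel
    rw [this]
    exact SetLike.coe_mem _
  rw [inner_sub_right] at h1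
  linarith

lemma continuous_perpP : Continuous (perpP L) :=
  continuous_id.sub (continuous_subtype_val.comp (L.orthogonalProjection).continuous)

lemma perpP_zero_of_mem {x : E} (hx : x ∈ L) : perpP L x = 0 := (perpP_eq_zero_iff L x).2 hx

end Perp

section Adj
variable {E F : Type*} [NormedAddCommGroup E] [InnerProductSpace ℝ E] [FiniteDimensional ℝ E]
  [NormedAddCommGroup F] [InnerProductSpace ℝ F] [FiniteDimensional ℝ F]

lemma exists_adjoint_eq (A : E →L[ℝ] F) (v : E)
    (hv : ∀ u, A u = 0 → (inner ℝ v u : ℝ) = 0) :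
    ∃ y, ContinuousLinearMap.adjoint A y = v := by
  set W : Submodule ℝ E := LinearMap.range (ContinuousLinearMap.adjoint A : F →ₗ[ℝ] E) with hW
  set r : E := v - (W.orthogonalProjection v : E) with hr
  have hrW : r ∈ Wᗮ := Submodule.sub_starProjection_mem_orthogonal v
  have hAr : A r = 0 := by
    have h1 : ∀ y : F, (inner ℝ (A r) y : ℝ) = 0 := by
      intro y
      have h2 : (ContinuousLinearMap.adjoint A) y ∈ W := LinearMap.mem_range.2 ⟨y, rfl⟩
      have h3 := Submodule.inner_right_of_mem_orthogonal h2 hrW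
      rw [ContinuousLinearMap.adjoint_inner_left] at h3
      rw [real_inner_comm]
      exact h3
    exact inner_self_eq_zero.1 (h1 (A r))
  have hvr : (inner ℝ v r : ℝ) = 0 := hv r hAr
  have hr0 : r = 0 := by
    have h5 : v - r ∈ W := by
      have : v - r = (W.orthogonalProjection v : E) := by rw [hr]; abel
      rw [this]; exact SetLike.coe_mem _
    have h4 := Submodule.inner_right_of_mem_orthogonal h5 hrW
    rw [inner_sub_left] at h4
    have h6 : (inner ℝ r r : ℝ) = 0 := by rw [← hvr]; linarith
    exact inner_self_eq_zero.1 h6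
  have hvW : v ∈ W := by
    have h7 : v = (W.orthogonalProjection v : E) := by
      have := hr0
      rw [hr, sub_eq_zero] at this
      exact this
    rw [h7]; exact SetLike.coe_mem _
  exact LinearMap.mem_range.1 hvW

lemma adjoint_eq_zero_of_mem_orth (A : E →L[ℝ] F) {h : F}
    (hh : h ∈ (LinearMap.range (A : E →ₗ[ℝ] F))ᗮ) : ContinuousLinearMap.adjoint A h = 0 := by
  have h1 : ∀ u : E, (inner ℝ (ContinuousLinearMap.adjoint A h) u : ℝ) = 0 := by
    intro u
    rw [ContinuousLinearMap.adjoint_inner_left]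
    have h2 : A u ∈ LinearMap.range (A : E →ₗ[ℝ] F) := LinearMap.mem_range.2 ⟨u, rfl⟩
    rw [real_inner_comm]
    exact Submodule.inner_right_of_mem_orthogonal h2 hh
  exact inner_self_eq_zero.1 (h1 _)

end Adj

section InfDistAux
variable {E F : Type*} [NormedAddCommGroup E] [NormedSpace ℝ E]
  [NormedAddCommGroup F] [NormedSpace ℝ F]

lemma le_infDist' {s : Set E} {x : E} {b : ℝ} (hs : s.Nonempty) (h : ∀ y ∈ s, b ≤ dist x y) :
    b ≤ infDist x s := by
  by_contra hlt
  push_neg at hlt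
  obtain ⟨y, hy, hd⟩ := (infDist_lt_iff hs).1 hlt
  exact absurd hd (not_lt.2 (h y hy))

lemma infDist_smul_cone {C : Set E} (hC : ∀ x ∈ C, ∀ c : ℝ, 0 < c → c • x ∈ C)
    (h0 : (0:E) ∈ C) {c : ℝ} (hc : 0 < c) (x : E) :
    infDist (c • x) C = c * infDist x C := by
  have aux : ∀ (d : ℝ), 0 < d → ∀ y : E, infDist (d • y) C ≤ d * infDist y C := by
    intro d hd y
    apply le_of_forall_pos_le_add
    intro ε hε
    obtain ⟨p, hp, hdist⟩ := (infDist_lt_iff ⟨0, h0⟩).1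
      (lt_add_of_pos_right (infDist y C) (div_pos hε hd))
    calc infDist (d • y) C ≤ dist (d • y) (d • p) := infDist_le_dist_of_mem (hC p hp d hd)
      _ = d * dist y p := by rw [dist_smul₀, Real.norm_eq_abs, abs_of_pos hd]
      _ ≤ d * (infDist y C + ε/d) := by nlinarith [dist_nonneg (x := y) (y := p)]
      _ = d * infDist y C + ε := by field_simp
  apply le_antisymm (aux c hc x)
  have h2 := aux c⁻¹ (by positivity) (c • x)
  rw [smul_smul, inv_mul_cancel₀ (ne_of_gt hc), one_smul] at h2
  have h3 := mul_le_mul_of_nonneg_left h2 (le_of_lt hc)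
  calc c * infDist x C ≤ c * (c⁻¹ * infDist (c • x) C) := h3
    _ = infDist (c • x) C := by field_simp

lemma infDist_image_le (A : E →L[ℝ] F) {S : Set E} (hS : S.Nonempty) (u : E) :
    infDist (A u) (A '' S) ≤ ‖A‖ * infDist u S := by
  apply le_of_forall_pos_le_add
  intro ε hε
  have hq : 0 < ε / (‖A‖ + 1) := by positivity
  obtain ⟨p, hp, hdist⟩ := (infDist_lt_iff hS).1 (lt_add_of_pos_right (infDist u S) hq)
  have hqe : (ε / (‖A‖ + 1)) * (‖A‖ + 1) = ε := div_mul_cancel₀ ε (by positivity)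
  calc infDist (A u) (A '' S) ≤ dist (A u) (A p) := infDist_le_dist_of_mem ⟨p, hp, rfl⟩
    _ ≤ ‖A‖ * dist u p := by
        rw [dist_eq_norm, dist_eq_norm, ← map_sub]
        exact A.le_opNorm _
    _ ≤ ‖A‖ * (infDist u S + ε/(‖A‖+1)) :=
        mul_le_mul_of_nonneg_left (le_of_lt hdist) (norm_nonneg _)
    _ ≤ ‖A‖ * infDist u S + ε := by nlinarith [norm_nonneg A, infDist_nonneg (x := u) (s := S)]

lemma infDist_zero_sub_set {K : Set F} (hK : K.Nonempty) (c : F) :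
    infDist (0:F) {v | c - v ∈ K} = infDist c K := by
  obtain ⟨p₀, hp₀⟩ := hK
  have hne : {v | c - v ∈ K}.Nonempty := ⟨c - p₀, by simp [sub_sub_cancel, hp₀]⟩
  apply le_antisymm
  · apply le_of_forall_pos_le_add
    intro ε hε
    obtain ⟨p, hp, hd⟩ := (infDist_lt_iff ⟨p₀, hp₀⟩).1 (lt_add_of_pos_right (infDist c K) hε)
    have hmem : (c - p) ∈ {v | c - v ∈ K} := by simp [sub_sub_cancel, hp]
    calc infDist (0:F) {v | c - v ∈ K} ≤ dist 0 (c - p) := infDist_le_dist_of_mem hmem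
      _ = dist c p := by rw [dist_eq_norm, dist_eq_norm, zero_sub, norm_neg]
      _ ≤ infDist c K + ε := le_of_lt hd
  · apply le_of_forall_pos_le_add
    intro ε hε
    obtain ⟨v, hv, hd⟩ := (infDist_lt_iff hne).1 (lt_add_of_pos_right (infDist 0 _) hε)
    calc infDist c K ≤ dist c (c - v) := infDist_le_dist_of_mem hv
      _ = dist (0:F) v := by
          rw [dist_eq_norm, dist_eq_norm, zero_sub, norm_neg, sub_sub_cancel]
      _ ≤ infDist (0:F) {v | c - v ∈ K} + ε := le_of_lt hd

end InfDistAux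

/-! ### Part 4: attainment and multiplier construction -/
section Attain
open RealInnerProductSpace
variable {E : Type*} [NormedAddCommGroup E] [InnerProductSpace ℝ E] [FiniteDimensional ℝ E]

lemma norm_add_le_one_add {a b : E} (ha : ‖a‖ = 1) :
    ‖a + b‖ ≤ 1 + ⟪a, b⟫ + ‖b‖^2/2 := by
  have h2 := norm_add_sq_real a b
  rw [ha] at h2
  have hCS := abs_real_inner_le_norm a b
  rw [ha, one_mul] at hCS
  have hb := norm_nonneg b
  have hx := norm_nonneg (a + b)
  have h3 : -‖b‖ ≤ ⟪a, b⟫ := neg_le_of_abs_le hCS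
  have hc : (0:ℝ) < 1 + ⟪a, b⟫ + ‖b‖^2/2 := by nlinarith [sq_nonneg (1 - ‖b‖)]
  by_contra h
  push_neg at h
  have h4 : (0:ℝ) < (‖a + b‖ - (1 + ⟪a, b⟫ + ‖b‖^2/2)) * (‖a + b‖ + (1 + ⟪a, b⟫ + ‖b‖^2/2)) :=
    mul_pos (by linarith) (by linarith)
  nlinarith [sq_nonneg (⟪a, b⟫ + ‖b‖^2/2)]

lemma perpP_sub (L : Submodule ℝ E) (x y : E) :
    perpP L (x - y) = perpP L x - perpP L y := by
  simp only [perpP, map_sub, Submodule.coe_sub]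
  abel

lemma perpP_zero (L : Submodule ℝ E) : perpP L (0:E) = 0 := by
  simp [perpP]

lemma attain_multiplier (Lsub S : Submodule ℝ E) (y₀ : E) (M₀ : ℝ)
    (K' : Set E) (hcl : IsClosed K') (h0 : (0:E) ∈ K')
    (hcone : ∀ x ∈ K', ∀ c : ℝ, 0 < c → c • x ∈ K')
    (hS₁ : ∀ x ∈ K', ∀ s ∈ S, x + s ∈ K')
    (hSL : S ≤ Lsub)
    (hSy : ∀ s ∈ S, ⟪y₀, s⟫ = 0)
    (hinv : ∀ x ∈ K', ⟪y₀, x⟫ ≤ M₀ * ‖perpP Lsub x‖)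
    (hZ : ∀ v ∈ K', v ∈ Lsub → ⟪y₀, v⟫ = 0 → v ∈ Sᗮ → v = 0) :
    ∃ w' ∈ K', ∃ y : E, y - y₀ ∈ Lsubᗮ ∧ ∀ u ∈ tangentConeSeq K' w', ⟪y, u⟫ ≤ 0 := by
  classical
  set Q : E → E := perpP Lsub with hQ
  set F : Set E := K' ∩ {x | ‖Q x‖ ≤ 1} ∩ (Sᗮ : Set E) ∩ {x | 0 ≤ ⟪y₀, x⟫} with hF
  have hQcont : Continuous Q := continuous_perpP Lsub
  have hF0 : (0:E) ∈ F := by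
    refine ⟨⟨⟨h0, ?_⟩, Submodule.zero_mem _⟩, ?_⟩
    · show ‖Q 0‖ ≤ 1
      rw [hQ, perpP_zero]; simp
    · show 0 ≤ ⟪y₀, (0:E)⟫
      rw [inner_zero_right]
  have hFclosed : IsClosed F := by
    refine IsClosed.inter (IsClosed.inter (IsClosed.inter hcl ?_) ?_) ?_
    · exact isClosed_le (hQcont.norm) continuous_const
    · exact Submodule.closed_of_finiteDimensional _
    · exact isClosed_le continuous_const (Continuous.inner continuous_const continuous_id)
  have hFbounded : Bornology.IsBounded F := by
    by_contra hub
    rw [isBounded_iff_forall_norm_le] at hub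
    push_neg at hub
    have hub' : ∀ n : ℕ, ∃ x ∈ F, (n:ℝ) < ‖x‖ := fun n => hub n
    choose xs hxsF hxsn using hub'
    have hxspos : ∀ n, 0 < ‖xs n‖ := fun n => lt_of_le_of_lt (Nat.cast_nonneg n) (hxsn n)
    set u : ℕ → E := fun n => (‖xs n‖)⁻¹ • xs n with hu
    have husphere : ∀ n, u n ∈ sphere (0:E) 1 := by
      intro n
      rw [mem_sphere_zero_iff_norm, hu]
      show ‖(‖xs n‖)⁻¹ • xs n‖ = 1
      rw [norm_smul, norm_inv, norm_norm, inv_mul_cancel₀ (ne_of_gt (hxspos n))]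
    obtain ⟨v, hvsph, φ, hφmono, hφtend⟩ := (isCompact_sphere (0:E) 1).tendsto_subseq husphere
    have huK : ∀ n, u n ∈ K' := fun n => hcone _ (hxsF n).1.1.1 _ (inv_pos.2 (hxspos n))
    have hvK : v ∈ K' := hcl.mem_of_tendsto hφtend (Eventually.of_forall (fun n => huK (φ n)))
    have hnorminv : Tendsto (fun n => (‖xs (φ n)‖)⁻¹) atTop (nhds 0) := by
      apply Tendsto.comp tendsto_inv_atTop_zero
      apply tendsto_atTop_mono
        (fun n => le_of_lt (lt_of_le_of_lt (Nat.cast_le.2 hφmono.le_apply) (hxsn (φ n))))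
      exact tendsto_natCast_atTop_atTop
    have hQulim : Tendsto (fun n => ‖Q (u (φ n))‖) atTop (nhds ‖Q v‖) :=
      ((hQcont.norm).tendsto v).comp hφtend
    have hQusmall : ∀ n, ‖Q (u n)‖ ≤ (‖xs n‖)⁻¹ := by
      intro n
      show ‖perpP Lsub ((‖xs n‖)⁻¹ • xs n)‖ ≤ (‖xs n‖)⁻¹
      rw [perpP_smul, norm_smul, norm_inv, norm_norm]
      have h1 : ‖perpP Lsub (xs n)‖ ≤ 1 := (hxsF n).1.1.2
      have h2 : (0:ℝ) ≤ (‖xs n‖)⁻¹ := le_of_lt (inv_pos.2 (hxspos n))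
      calc (‖xs n‖)⁻¹ * ‖perpP Lsub (xs n)‖ ≤ (‖xs n‖)⁻¹ * 1 :=
            mul_le_mul_of_nonneg_left h1 h2
        _ = (‖xs n‖)⁻¹ := mul_one _
    have hQv : ‖Q v‖ = 0 := by
      apply le_antisymm _ (norm_nonneg _)
      apply le_of_tendsto_of_tendsto' hQulim hnorminv
      exact fun n => hQusmall (φ n)
    have hvL : v ∈ Lsub := (perpP_eq_zero_iff Lsub v).1 (norm_eq_zero.1 hQv)
    have hinner_lim : Tendsto (fun n => ⟪y₀, u (φ n)⟫) atTop (nhds ⟪y₀, v⟫) :=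
      Tendsto.inner tendsto_const_nhds hφtend
    have hyv_le : ⟪y₀, v⟫ ≤ 0 := by
      have ht : Tendsto (fun n => M₀ * ‖Q (u (φ n))‖) atTop (nhds 0) := by
        have h5 := hQulim.const_mul M₀
        rwa [hQv, mul_zero] at h5
      exact le_of_tendsto_of_tendsto' hinner_lim ht (fun n => hinv _ (huK (φ n)))
    have hyv_ge : (0:ℝ) ≤ ⟪y₀, v⟫ := by
      apply ge_of_tendsto hinner_lim
      filter_upwards with n
      have h1 : 0 ≤ ⟪y₀, xs (φ n)⟫ := (hxsF (φ n)).2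
      show 0 ≤ ⟪y₀, (‖xs (φ n)‖)⁻¹ • xs (φ n)⟫
      rw [real_inner_smul_right]
      exact mul_nonneg (le_of_lt (inv_pos.2 (hxspos (φ n)))) h1
    have hvS : v ∈ Sᗮ := by
      rw [Submodule.mem_orthogonal]
      intro s hs
      have hlim2 : Tendsto (fun n => ⟪s, u (φ n)⟫) atTop (nhds ⟪s, v⟫) :=
        Tendsto.inner tendsto_const_nhds hφtend
      have hzero : ∀ n, ⟪s, u n⟫ = 0 := by
        intro n
        have h1 : xs n ∈ Sᗮ := (hxsF n).1.2
        have h2 := (Submodule.mem_orthogonal _ _).1 h1 s hs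
        show ⟪s, (‖xs n‖)⁻¹ • xs n⟫ = 0
        rw [real_inner_smul_right, h2, mul_zero]
      have hlim3 : Tendsto (fun _ : ℕ => (0:ℝ)) atTop (nhds ⟪s, v⟫) :=
        hlim2.congr (fun n => hzero (φ n))
      exact tendsto_nhds_unique hlim3 tendsto_const_nhds
    have hv0 := hZ v hvK hvL (le_antisymm hyv_le hyv_ge) hvS
    rw [hv0, mem_sphere_zero_iff_norm, norm_zero] at hvsph
    norm_num at hvsph
  have hFcompact : IsCompact F := isCompact_of_isClosed_isBounded hFclosed hFbounded
  obtain ⟨wb, hwbF, hmax0⟩ := hFcompact.exists_isMaxOn (f := fun x : E => (⟪y₀, x⟫ : ℝ))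
    ⟨0, hF0⟩
    ((Continuous.inner (continuous_const : Continuous fun _ : E => y₀) continuous_id).continuousOn)
  have hmax : ∀ x ∈ F, ⟪y₀, x⟫ ≤ ⟪y₀, wb⟫ := fun x hx => by simpa using hmax0 hx
  have hM0 : (0:ℝ) ≤ ⟪y₀, wb⟫ := by
    have := hmax 0 hF0
    rwa [inner_zero_right] at this
  set M : ℝ := ⟪y₀, wb⟫ with hM
  have hglob : ∀ x ∈ K', ‖Q x‖ ≤ 1 → ⟪y₀, x⟫ ≤ M := by
    intro x hx hQx
    set p : E := (S.orthogonalProjection x : E) with hp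
    have hpS : p ∈ S := SetLike.coe_mem _
    have hx'K : x - p ∈ K' := by
      rw [sub_eq_add_neg]
      exact hS₁ x hx _ (S.neg_mem hpS)
    have hQx' : Q (x - p) = Q x := by
      rw [hQ]
      rw [perpP_sub, perpP_zero_of_mem Lsub (hSL hpS), sub_zero]
    have hx'S : x - p ∈ Sᗮ := Submodule.sub_starProjection_mem_orthogonal x
    have hy' : ⟪y₀, x - p⟫ = ⟪y₀, x⟫ := by
      rw [inner_sub_right, hSy p hpS, sub_zero]
    by_cases hsign : 0 ≤ ⟪y₀, x - p⟫
    · have hmem : x - p ∈ F := ⟨⟨⟨hx'K, by rw [Set.mem_setOf_eq, hQx']; exact hQx⟩, hx'S⟩, hsign⟩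
      have h6 := hmax _ hmem
      rwa [hy'] at h6
    · push_neg at hsign
      rw [← hy']
      linarith
  have hmaster : ∀ x ∈ K', ⟪y₀, x⟫ ≤ M * ‖Q x‖ := by
    intro x hx
    rcases eq_or_lt_of_le (norm_nonneg (Q x)) with h0' | hpos
    · have hle : ⟪y₀, x⟫ ≤ 0 := by
        by_contra hgt
        push_neg at hgt
        have hRpos : 0 < (M+1)/⟪y₀, x⟫ := div_pos (by linarith) hgt
        have h1 := hglob (((M+1)/⟪y₀, x⟫) • x) (hcone x hx _ hRpos) ?_
        · rw [real_inner_smul_right, div_mul_cancel₀ _ (ne_of_gt hgt)] at h1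
          linarith
        · show ‖Q (((M+1)/⟪y₀, x⟫) • x)‖ ≤ 1
          rw [hQ, perpP_smul, norm_smul]
          rw [hQ] at h0'
          rw [← h0', mul_zero]
          norm_num
      calc ⟪y₀, x⟫ ≤ 0 := hle
        _ = M * ‖Q x‖ := by rw [← h0', mul_zero]
    · have h1 := hglob ((‖Q x‖)⁻¹ • x) (hcone x hx _ (inv_pos.2 hpos)) ?_
      · rw [real_inner_smul_right] at h1
        have h2 := mul_le_mul_of_nonneg_left h1 (le_of_lt hpos)
        rw [← mul_assoc, mul_inv_cancel₀ (ne_of_gt hpos), one_mul] at h2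
        calc ⟪y₀, x⟫ ≤ ‖Q x‖ * M := h2
          _ = M * ‖Q x‖ := mul_comm _ _
      · show ‖Q ((‖Q x‖)⁻¹ • x)‖ ≤ 1
        rw [hQ, perpP_smul, norm_smul, norm_inv, norm_norm]
        rw [hQ] at hpos
        rw [inv_mul_cancel₀ (ne_of_gt hpos)]
  by_cases hMpos : 0 < M
  · have hQwb_le : ‖Q wb‖ ≤ 1 := hwbF.1.1.2
    have hQwb : ‖Q wb‖ = 1 := by
      rcases lt_or_eq_of_le hQwb_le with hlt | heq
      · exfalso
        have hε'pos : (0:ℝ) < 1 - ‖Q wb‖ := by linarith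
        have hmem : (1+(1 - ‖Q wb‖)) • wb ∈ F := by
          refine ⟨⟨⟨hcone _ hwbF.1.1.1 _ (by linarith), ?_⟩,
            Submodule.smul_mem _ _ hwbF.1.2⟩, ?_⟩
          · show ‖Q ((1+(1 - ‖Q wb‖)) • wb)‖ ≤ 1
            rw [hQ, perpP_smul, norm_smul, Real.norm_eq_abs,
              abs_of_pos (by linarith : (0:ℝ) < 1+(1 - ‖Q wb‖))]
            rw [hQ] at hQwb_le ⊢
            nlinarith [norm_nonneg (perpP Lsub wb), sq_nonneg (1 - ‖perpP Lsub wb‖)]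
          · show 0 ≤ ⟪y₀, (1+(1 - ‖Q wb‖)) • wb⟫
            rw [real_inner_smul_right]
            nlinarith
        have hcontra := hmax _ hmem
        rw [real_inner_smul_right, ← hM] at hcontra
        nlinarith
      · exact heq
    refine ⟨wb, hwbF.1.1.1, y₀ - M • Q wb, ?_, ?_⟩
    · have h7 : y₀ - M • Q wb - y₀ = -(M • Q wb) := by abel
      rw [h7]
      exact Submodule.neg_mem _ (Submodule.smul_mem _ _ (perpP_mem_orth Lsub wb))
    · intro u hu
      obtain ⟨t, wk, ht0, htl, hwl, hm⟩ := hu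
      have key : ∀ k, ⟪y₀, wk k⟫ - M * ⟪Q wb, Q (wk k)⟫ ≤ M * (t k * ‖Q (wk k)‖^2/2) := by
        intro k
        have h1 := hmaster _ (hm k)
        rw [inner_add_right, real_inner_smul_right, ← hM] at h1
        have hQsplit : Q (wb + t k • wk k) = Q wb + t k • Q (wk k) := by
          rw [hQ, perpP_add, perpP_smul]
        rw [hQsplit] at h1
        have h2 : ‖Q wb + t k • Q (wk k)‖
            ≤ 1 + t k * ⟪Q wb, Q (wk k)⟫ + (t k)^2 * ‖Q (wk k)‖^2/2 := by
          have h8 := norm_add_le_one_add (b := t k • Q (wk k)) hQwb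
          rwa [real_inner_smul_right, norm_smul, Real.norm_eq_abs, abs_of_pos (ht0 k),
            mul_pow] at h8
        have h3 : M + t k * ⟪y₀, wk k⟫
            ≤ M * (1 + t k * ⟪Q wb, Q (wk k)⟫ + (t k)^2 * ‖Q (wk k)‖^2/2) :=
          le_trans h1 (mul_le_mul_of_nonneg_left h2 (le_of_lt hMpos))
        have h4 := ht0 k
        nlinarith [h3]
      have hLHS : Tendsto (fun k => ⟪y₀, wk k⟫ - M * ⟪Q wb, Q (wk k)⟫) atTop
          (nhds (⟪y₀, u⟫ - M * ⟪Q wb, Q u⟫)) := by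
        apply Tendsto.sub (Tendsto.inner tendsto_const_nhds hwl)
        exact (Tendsto.inner tendsto_const_nhds ((hQcont.tendsto u).comp hwl)).const_mul M
      have hRHS : Tendsto (fun k => M * (t k * ‖Q (wk k)‖^2/2)) atTop (nhds 0) := by
        have h5 : Tendsto (fun k => ‖Q (wk k)‖^2) atTop (nhds (‖Q u‖^2)) :=
          (((hQcont.tendsto u).comp hwl).norm).pow 2
        have h6 := ((htl.mul h5).div_const 2).const_mul M
        rw [zero_mul, zero_div, mul_zero] at h6
        exact h6
      have hfinal := le_of_tendsto_of_tendsto' hLHS hRHS key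
      have hiden : ⟪Q wb, Q u⟫ = ⟪Q wb, u⟫ := inner_perpP_perpP Lsub wb u
      rw [inner_sub_left, real_inner_smul_left]
      rw [hiden] at hfinal
      linarith
  · push_neg at hMpos
    have hMeq : M = 0 := le_antisymm hMpos hM0
    refine ⟨0, h0, y₀, by rw [sub_self]; exact Submodule.zero_mem _, ?_⟩
    intro u hu
    have huK : u ∈ K' := tcs_zero_subset hcl hcone hu
    have h9 := hmaster u huK
    rw [hMeq, zero_mul] at h9
    exact h9

end Attain

/-! ### Part 5: main recursion -/
section Main
open RealInnerProductSpace
variable {E : Type*} [NormedAddCommGroup E] [InnerProductSpace ℝ E] [FiniteDimensional ℝ E]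

lemma main_recursion (Lsub : Submodule ℝ E) (y₀ : E) (M₀ : ℝ) (K : Set E) (G2 : Prop) :
    ∀ (m : ℕ) (K' : Set E) (S : Submodule ℝ E),
    IsClosed K' → (0:E) ∈ K' → (∀ x ∈ K', ∀ c : ℝ, 0 < c → c • x ∈ K') →
    (∀ x ∈ K', ∀ s ∈ S, x + s ∈ K') → S ≤ Lsub → (∀ s ∈ S, ⟪y₀, s⟫ = 0) →
    (∀ x ∈ K', ⟪y₀, x⟫ ≤ M₀ * ‖perpP Lsub x‖) →
    (∀ w' ∈ K', ∃ w ∈ K, tangentConeSeq K w ⊆ tangentConeSeq K' w') →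
    (Module.finrank ℝ E ≤ Module.finrank ℝ S + m) →
    (∀ v ∈ K', v ∈ Lsub → ⟪y₀, v⟫ = 0 → v ∈ Sᗮ → v ≠ 0 →
        (LocallyPolyhedral K' v ∨ G2)) →
    (∃ w ∈ K, ∃ y : E, y - y₀ ∈ Lsubᗮ ∧ ∀ u ∈ tangentConeSeq K w, ⟪y, u⟫ ≤ 0) ∨ G2 := by
  intro m
  induction m with
  | zero =>
    intro K' S hcl h0 hcone hS1 hSL hSy hinv hrel hrank _
    have hZ : ∀ v ∈ K', v ∈ Lsub → ⟪y₀, v⟫ = 0 → v ∈ Sᗮ → v = 0 := by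
      intro v _ _ _ hvS
      have hrank' : Module.finrank ℝ E ≤ Module.finrank ℝ S := by simpa using hrank
      have hStop : S = ⊤ :=
        Submodule.eq_top_of_finrank_eq (le_antisymm (Submodule.finrank_le S) hrank')
      rw [hStop, Submodule.top_orthogonal_eq_bot] at hvS
      exact (Submodule.mem_bot ℝ).1 hvS
    obtain ⟨w', hw', y, hy1, hy2⟩ :=
      attain_multiplier Lsub S y₀ M₀ K' hcl h0 hcone hS1 hSL hSy hinv hZ
    obtain ⟨w, hw, hsub⟩ := hrel w' hw'
    exact Or.inl ⟨w, hw, y, hy1, fun u hu => hy2 u (hsub hu)⟩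
  | succ m ih =>
    intro K' S hcl h0 hcone hS1 hSL hSy hinv hrel hrank hesc
    by_cases hex : ∃ v, v ∈ K' ∧ v ∈ Lsub ∧ ⟪y₀, v⟫ = 0 ∧ v ∈ Sᗮ ∧ v ≠ 0
    · obtain ⟨v, hvK, hvL, hvy, hvS, hvne⟩ := hex
      rcases hesc v hvK hvL hvy hvS hvne with hLP | hG2
      · -- recurse on the tangent cone at the escape direction
        obtain ⟨ε, hε, hSetEq, hTpoly⟩ := locallyPolyhedral_conic hvK hLP
        set T : Set E := tangentConeSeq K' v with hT
        have hTclosed : IsClosed T := tcs_isClosed K' v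
        have hTcone : ∀ x ∈ T, ∀ c : ℝ, 0 < c → c • x ∈ T := fun x hx c hc => tcs_smul_mem hc hx
        have hT0 : (0:E) ∈ T := tcs_zero_mem hvK
        set S' : Submodule ℝ E := S ⊔ Submodule.span ℝ {v} with hS'
        have hS1' : ∀ x ∈ T, ∀ s ∈ S', x + s ∈ T := by
          intro x hx s hs
          rw [hS', Submodule.mem_sup] at hs
          obtain ⟨a, ha, b, hb, rfl⟩ := hs
          obtain ⟨c, rfl⟩ := Submodule.mem_span_singleton.1 hb
          have h1 : x + a ∈ T := tcs_invariant hS1 hx ha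
          have h2 := tcs_add_smul_base hcone h1 c
          rw [← add_assoc] at *
          exact h2
        have hSL' : S' ≤ Lsub :=
          sup_le hSL ((Submodule.span_singleton_le_iff_mem _ _).2 hvL)
        have hSy' : ∀ s ∈ S', ⟪y₀, s⟫ = 0 := by
          intro s hs
          rw [hS', Submodule.mem_sup] at hs
          obtain ⟨a, ha, b, hb, rfl⟩ := hs
          obtain ⟨c, rfl⟩ := Submodule.mem_span_singleton.1 hb
          rw [inner_add_right, hSy a ha, real_inner_smul_right, hvy]
          ring
        have hinv' : ∀ x ∈ T, ⟪y₀, x⟫ ≤ M₀ * ‖perpP Lsub x‖ := by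
          intro x hx
          obtain ⟨t, wk, ht0, htl, hwl, hm⟩ := hx
          have hkey : ∀ k, ⟪y₀, wk k⟫ ≤ M₀ * ‖perpP Lsub (wk k)‖ := by
            intro k
            have h1 := hinv _ (hm k)
            rw [inner_add_right, real_inner_smul_right, hvy, zero_add] at h1
            have h2 : perpP Lsub (v + t k • wk k) = t k • perpP Lsub (wk k) := by
              rw [perpP_add, perpP_smul, perpP_zero_of_mem Lsub hvL, zero_add]
            rw [h2, norm_smul, Real.norm_eq_abs, abs_of_pos (ht0 k)] at h1
            have h3 := ht0 k
            nlinarith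
          have hl1 : Tendsto (fun k => ⟪y₀, wk k⟫) atTop (nhds ⟪y₀, x⟫) :=
            Tendsto.inner tendsto_const_nhds hwl
          have hl2 : Tendsto (fun k => M₀ * ‖perpP Lsub (wk k)‖) atTop
              (nhds (M₀ * ‖perpP Lsub x‖)) :=
            ((((continuous_perpP Lsub).tendsto x).comp hwl).norm).const_mul M₀
          exact le_of_tendsto_of_tendsto' hl1 hl2 hkey
        have hrelT : ∀ w'' ∈ T, ∃ w ∈ K, tangentConeSeq K w ⊆ tangentConeSeq T w'' := by
          intro w'' hw''
          set δ : ℝ := ε / (2 * (‖w''‖ + 1)) with hδ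
          have hδpos : 0 < δ := by positivity
          have hδn : δ * ‖w''‖ < ε/2 := by
            rw [hδ, div_mul_eq_mul_div, div_lt_div_iff₀ (by positivity) (by norm_num : (0:ℝ) < 2)]
            nlinarith [norm_nonneg w'']
          have hmemT : δ • w'' ∈ T := tcs_smul_mem hδpos hw''
          have hdist : dist (v + δ • w'') v = δ * ‖w''‖ := by
            rw [dist_eq_norm, add_sub_cancel_left, norm_smul, Real.norm_eq_abs, abs_of_pos hδpos]
          have hwK' : v + δ • w'' ∈ K' := by
            have hmem2 : v + δ • w'' ∈ {y | y - v ∈ T} ∩ ball v ε := by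
              constructor
              · show v + δ • w'' - v ∈ T
                rwa [add_sub_cancel_left]
              · rw [mem_ball, hdist]; linarith
            rw [← hSetEq] at hmem2
            exact hmem2.1
          have hballsub : ball (v + δ • w'') (ε/2) ⊆ ball v ε := by
            intro x hx
            rw [mem_ball] at hx ⊢
            calc dist x v ≤ dist x (v + δ • w'') + dist (v + δ • w'') v := dist_triangle _ _ _
              _ < ε/2 + δ * ‖w''‖ := by rw [hdist]; linarith
              _ < ε := by linarith
          have h1eq : K' ∩ ball (v + δ • w'') (ε/2)
              = {y | y - v ∈ T} ∩ ball (v + δ • w'') (ε/2) := by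
            ext x
            constructor <;> rintro ⟨hx1, hx2⟩
            · have hmem3 : x ∈ K' ∩ ball v ε := ⟨hx1, hballsub hx2⟩
              rw [hSetEq] at hmem3
              exact ⟨hmem3.1, hx2⟩
            · have hmem3 : x ∈ {y | y - v ∈ T} ∩ ball v ε := ⟨hx1, hballsub hx2⟩
              rw [← hSetEq] at hmem3
              exact ⟨hmem3.1, hx2⟩
          have htan : tangentConeSeq K' (v + δ • w'') = tangentConeSeq T w'' := by
            have h1 := tcs_congr_local (half_pos hε) h1eq
            have h2 := tcs_shift (T := T) v (δ • w'')
            have h3 : tangentConeSeq T (δ • w'') = tangentConeSeq T w'' :=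
              tcs_cone_base_smul hTcone hδpos
            rw [h1, h2, h3]
          obtain ⟨w, hw, hsub⟩ := hrel (v + δ • w'') hwK'
          exact ⟨w, hw, by rw [← htan]; exact hsub⟩
        have hrank' : Module.finrank ℝ E ≤ Module.finrank ℝ S' + m := by
          have hlt : S < S' := by
            apply lt_of_le_of_ne le_sup_left
            intro heq
            have hvS' : v ∈ S' := by
              rw [hS']
              exact Submodule.mem_sup_right (Submodule.mem_span_singleton_self v)
            have hvS2 : v ∈ S := (le_of_eq heq.symm) hvS'
            have h4 := (Submodule.mem_orthogonal _ _).1 hvS v hvS2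
            exact hvne (inner_self_eq_zero.1 h4)
          have hfr := Submodule.finrank_lt_finrank_of_lt hlt
          omega
        have hesc' : ∀ v' ∈ T, v' ∈ Lsub → ⟪y₀, v'⟫ = 0 → v' ∈ S'ᗮ → v' ≠ 0 →
            (LocallyPolyhedral T v' ∨ G2) := by
          intro v' _ _ _ _ _
          exact Or.inl ⟨Set.univ, Filter.univ_mem, T, hTpoly, rfl⟩
        exact ih T S' hTclosed hT0 hTcone hS1' hSL' hSy' hinv' hrelT hrank' hesc'
      · exact Or.inr hG2
    · have hZ : ∀ v ∈ K', v ∈ Lsub → ⟪y₀, v⟫ = 0 → v ∈ Sᗮ → v = 0 := by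
        intro v hv h1 h2 h3
        by_contra hne
        exact hex ⟨v, hv, h1, h2, h3, hne⟩
      obtain ⟨w', hw', y, hy1, hy2⟩ :=
        attain_multiplier Lsub S y₀ M₀ K' hcl h0 hcone hS1 hSL hSy hinv hZ
      obtain ⟨w, hw, hsub⟩ := hrel w' hw'
      exact Or.inl ⟨w, hw, y, hy1, fun u hu => hy2 u (hsub hu)⟩

end Main

set_option maxHeartbeats 2000000 in
theorem stmt17 {d s : ℕ} (f : Rd d → ℝ) (hf : ContDiff ℝ 1 f)
    (P : Rd d → Rd s) (hP : ContDiff ℝ 1 P) (D : Set (Rd s)) (hD : IsClosed D)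
    (Ω : Set (Rd d)) (hΩ : Ω = {x | P x ∈ D}) (z : Rd d) (hz : z ∈ Ω)
    (hBstat : ∀ w ∈ tangentConeSeq Ω z, (0:ℝ) ≤ inner ℝ (gradient f z) w)
    (Tlin : Set (Rd d)) (hTlin : Tlin = {u | fderiv ℝ P z u ∈ tangentConeSeq D (P z)})
    (hGGCQ : regNormal Ω z = polarCone Tlin)
    (hsub : MetricallySubregular
      (fun u => {v : Rd s | fderiv ℝ P z u - v ∈ tangentConeSeq D (P z)}) 0 0) :
    (∃ w ∈ tangentConeSeq D (P z), ∃ ws ∈ regNormal (tangentConeSeq D (P z)) w,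
        gradient f z + ContinuousLinearMap.adjoint (fderiv ℝ P z) ws = 0) ∨
    (∃ u : Rd d, fderiv ℝ P z u ∈ tangentConeSeq D (P z) ∧
        fderiv ℝ P z u ∉ Lsp (tangentConeSeq D (P z)) ∧
        (inner ℝ (gradient f z) u : ℝ) = 0 ∧
        -gradient f z ∈ regNormal Tlin u ∧
        ¬ LocallyPolyhedral (tangentConeSeq D (P z)) (fderiv ℝ P z u)) := by
  classical
  set A := fderiv ℝ P z with hA
  set K := tangentConeSeq D (P z) with hK
  set g := gradient f z with hg
  have hPz : P z ∈ D := by rw [hΩ] at hz; exact hz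
  have hK0 : (0 : Rd s) ∈ K := tcs_zero_mem hPz
  have hKcone : ∀ x ∈ K, ∀ c : ℝ, 0 < c → c • x ∈ K := fun x hx c hc => tcs_smul_mem hc hx
  have hKclosed : IsClosed K := tcs_isClosed D (P z)
  have hTlinmem : ∀ u, u ∈ Tlin ↔ A u ∈ K := by
    intro u; rw [hTlin]; exact Iff.rfl
  have hvpolar : ∀ u ∈ Tlin, (inner ℝ (-g) u : ℝ) ≤ 0 := by
    have hreg : -g ∈ regNormal Ω z := by
      refine ⟨hz, fun w hw => ?_⟩
      have := hBstat w hw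
      rw [inner_neg_left]
      linarith
    rw [hGGCQ] at hreg
    exact hreg
  have h0Tlin : (0 : Rd d) ∈ Tlin := (hTlinmem 0).2 (by rw [map_zero]; exact hK0)
  have hTlincone : ∀ u ∈ Tlin, ∀ c : ℝ, 0 < c → c • u ∈ Tlin := by
    intro u hu c hc
    apply (hTlinmem _).2
    rw [map_smul]
    exact hKcone _ ((hTlinmem u).1 hu) c hc
  have hker : ∀ u, A u = 0 → (inner ℝ (-g) u : ℝ) = 0 := by
    intro u hu
    have h1 : u ∈ Tlin := (hTlinmem u).2 (by rw [hu]; exact hK0)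
    have h2 : -u ∈ Tlin := (hTlinmem (-u)).2 (by rw [map_neg, hu, neg_zero]; exact hK0)
    have h3 := hvpolar u h1
    have h4 := hvpolar (-u) h2
    rw [inner_neg_right] at h4
    linarith
  obtain ⟨y₀, hy₀⟩ := exists_adjoint_eq A (-g) hker
  set Lsub : Submodule ℝ (Rd s) := LinearMap.range (A : Rd d →ₗ[ℝ] Rd s) with hLsub
  have hy₀polar : ∀ x, x ∈ K → x ∈ Lsub → (inner ℝ y₀ x : ℝ) ≤ 0 := by
    intro x hxK hxL
    obtain ⟨u, hu⟩ : ∃ u, A u = x := LinearMap.mem_range.1 hxL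
    have h1 : u ∈ Tlin := (hTlinmem u).2 (by rw [hu]; exact hxK)
    have h2 := hvpolar u h1
    calc (inner ℝ y₀ x : ℝ) = inner ℝ y₀ (A u) := by rw [hu]
      _ = inner ℝ (ContinuousLinearMap.adjoint A y₀) u :=
          (ContinuousLinearMap.adjoint_inner_left A u y₀).symm
      _ = inner ℝ (-g) u := by rw [hy₀]
      _ ≤ 0 := h2
  obtain ⟨hsub0, κ, hκ, U, hU, hsubineq⟩ := hsub
  -- global subregularity estimate
  have hglobal : ∀ u : Rd d, infDist u Tlin ≤ κ * infDist (A u) K := by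
    intro u
    obtain ⟨δ, hδ, hball⟩ := Metric.mem_nhds_iff.1 hU
    have hcpos : 0 < δ / (2 * (‖u‖ + 1)) := by positivity
    set c : ℝ := δ / (2 * (‖u‖ + 1)) with hc
    have hmemU : c • u ∈ U := by
      apply hball
      rw [mem_ball_zero_iff, norm_smul, Real.norm_eq_abs, abs_of_pos hcpos, hc,
        div_mul_eq_mul_div, div_lt_iff₀ (by positivity)]
      nlinarith [norm_nonneg u, hδ]
    have h1 : infDist (c • u) {x : Rd d | A x - 0 ∈ K}
        ≤ κ * infDist (0 : Rd s) {v : Rd s | A (c • u) - v ∈ K} := hsubineq (c • u) hmemU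
    have hTset : {x : Rd d | A x - 0 ∈ K} = Tlin := by
      ext u'; rw [hTlin]; simp [sub_zero]
    rw [hTset, infDist_zero_sub_set ⟨0, hK0⟩ (A (c • u)),
      infDist_smul_cone hTlincone h0Tlin hcpos u, map_smul,
      infDist_smul_cone hKcone hK0 hcpos (A u)] at h1
    have h2 : c * infDist u Tlin ≤ c * (κ * infDist (A u) K) := by
      rw [show c * (κ * infDist (A u) K) = κ * (c * infDist (A u) K) by ring]
      exact h1
    exact le_of_mul_le_mul_left h2 hcpos
  have himg : A '' Tlin = K ∩ (Lsub : Set (Rd s)) := by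
    ext x
    constructor
    · rintro ⟨u, hu, rfl⟩
      exact ⟨(hTlinmem u).1 hu, LinearMap.mem_range.2 ⟨u, rfl⟩⟩
    · rintro ⟨hxK, hxL⟩
      obtain ⟨u, hu⟩ : ∃ u, A u = x := LinearMap.mem_range.1 hxL
      exact ⟨u, (hTlinmem u).2 (by rw [hu]; exact hxK), hu⟩
  -- master invariant
  set M₀ : ℝ := ‖y₀‖ * (‖A‖ * κ + 1) with hM₀
  have hinv : ∀ x ∈ K, (inner ℝ y₀ x : ℝ) ≤ M₀ * ‖perpP Lsub x‖ := by
    intro x hxK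
    have hPxL : x - perpP Lsub x ∈ Lsub := by
      rw [perpP, sub_sub_cancel]
      exact SetLike.coe_mem _
    obtain ⟨u, hu⟩ : ∃ u, A u = x - perpP Lsub x := LinearMap.mem_range.1 hPxL
    have hch1 : infDist (x - perpP Lsub x) (A '' Tlin) ≤ ‖A‖ * infDist u Tlin := by
      rw [← hu]
      exact infDist_image_le A ⟨0, h0Tlin⟩ u
    have hch2 : infDist u Tlin ≤ κ * infDist (A u) K := hglobal u
    have hch3 : infDist (A u) K ≤ ‖perpP Lsub x‖ := by
      rw [hu]
      calc infDist (x - perpP Lsub x) K ≤ dist (x - perpP Lsub x) x :=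
            infDist_le_dist_of_mem hxK
        _ = ‖perpP Lsub x‖ := by
            rw [dist_eq_norm]
            rw [show x - perpP Lsub x - x = -(perpP Lsub x) by abel, norm_neg]
    apply le_of_forall_pos_le_add
    intro ε hε
    have hne : (A '' Tlin).Nonempty := ⟨A 0, 0, h0Tlin, rfl⟩
    have hεq : 0 < ε / (‖y₀‖ + 1) := by positivity
    have hlt : infDist (x - perpP Lsub x) (A '' Tlin)
        < ‖A‖ * κ * ‖perpP Lsub x‖ + ε / (‖y₀‖ + 1) := by
      have hb1 : infDist (x - perpP Lsub x) (A '' Tlin) ≤ ‖A‖ * κ * ‖perpP Lsub x‖ := by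
        calc infDist (x - perpP Lsub x) (A '' Tlin) ≤ ‖A‖ * infDist u Tlin := hch1
          _ ≤ ‖A‖ * (κ * infDist (A u) K) :=
              mul_le_mul_of_nonneg_left hch2 (norm_nonneg _)
          _ ≤ ‖A‖ * (κ * ‖perpP Lsub x‖) := by
              apply mul_le_mul_of_nonneg_left _ (norm_nonneg _)
              exact mul_le_mul_of_nonneg_left hch3 (le_of_lt hκ)
          _ = ‖A‖ * κ * ‖perpP Lsub x‖ := by ring
      linarith
    obtain ⟨zz, hzz, hdzz⟩ := (infDist_lt_iff hne).1 hlt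
    have hzz0 : (inner ℝ y₀ zz : ℝ) ≤ 0 := by
      rw [himg] at hzz
      exact hy₀polar zz hzz.1 hzz.2
    have hdecomp : (inner ℝ y₀ x : ℝ)
        = inner ℝ y₀ zz + inner ℝ y₀ ((x - perpP Lsub x) - zz) + inner ℝ y₀ (perpP Lsub x) := by
      rw [← inner_add_right, ← inner_add_right]
      congr 1
      abel
    have hb1 : (inner ℝ y₀ ((x - perpP Lsub x) - zz) : ℝ)
        ≤ ‖y₀‖ * (‖A‖ * κ * ‖perpP Lsub x‖ + ε / (‖y₀‖ + 1)) := by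
      calc (inner ℝ y₀ ((x - perpP Lsub x) - zz) : ℝ)
          ≤ ‖y₀‖ * ‖(x - perpP Lsub x) - zz‖ := real_inner_le_norm _ _
        _ ≤ _ := by
            apply mul_le_mul_of_nonneg_left _ (norm_nonneg _)
            rw [← dist_eq_norm]
            exact le_of_lt hdzz
    have hb2 : (inner ℝ y₀ (perpP Lsub x) : ℝ) ≤ ‖y₀‖ * ‖perpP Lsub x‖ := real_inner_le_norm _ _
    have hb3 : ‖y₀‖ * (ε / (‖y₀‖ + 1)) ≤ ε := by
      have h9 : ‖y₀‖ / (‖y₀‖ + 1) ≤ 1 := by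
        rw [div_le_one (by positivity)]
        linarith [norm_nonneg y₀]
      have h10 : ‖y₀‖ * (ε / (‖y₀‖ + 1)) = ε * (‖y₀‖ / (‖y₀‖ + 1)) := by ring
      rw [h10]
      nlinarith
    rw [hM₀]
    nlinarith [hzz0, hdecomp, hb1, hb2, hb3]
  -- maximal Lsp witness subspace
  set P1 : ℕ → Prop := fun n => ∃ V : Submodule ℝ (Rd s),
    (∀ c ∈ K, ∀ x ∈ V, c + x ∈ K) ∧ n ≤ Module.finrank ℝ V with hP1
  have hP0 : P1 0 := ⟨⊥, fun c hc x hx => by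
    rw [(Submodule.mem_bot ℝ).1 hx, add_zero]; exact hc, Nat.zero_le _⟩
  have hPbound : ∀ n, P1 n → n ≤ s := by
    rintro n ⟨V, _, hn⟩
    refine le_trans hn ?_
    have := Submodule.finrank_le V
    rwa [finrank_euclideanSpace_fin] at this
  have hPN : P1 (Nat.findGreatest P1 s) := Nat.findGreatest_spec (Nat.zero_le s) hP0
  obtain ⟨Vmax, hVwit, hVrank⟩ := hPN
  have hVmaxmax : ∀ (V' : Submodule ℝ (Rd s)), (∀ c ∈ K, ∀ x ∈ V', c + x ∈ K) → V' ≤ Vmax := by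
    intro V' hV'
    have hwit2 : ∀ c ∈ K, ∀ x ∈ Vmax ⊔ V', c + x ∈ K := by
      intro c hc x hx
      rw [Submodule.mem_sup] at hx
      obtain ⟨a, ha, b, hb, rfl⟩ := hx
      rw [← add_assoc]
      exact hV' _ (hVwit c hc a ha) b hb
    have hP2 : P1 (Module.finrank ℝ (Vmax ⊔ V' : Submodule ℝ (Rd s))) := ⟨_, hwit2, le_refl _⟩
    have hle : Module.finrank ℝ (Vmax ⊔ V' : Submodule ℝ (Rd s)) ≤ Nat.findGreatest P1 s :=
      Nat.le_findGreatest (hPbound _ hP2) hP2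
    have heq := Submodule.eq_of_le_of_finrank_le (le_sup_left : Vmax ≤ Vmax ⊔ V')
      (le_trans hle hVrank)
    exact le_trans le_sup_right (le_of_eq heq.symm)
  set Stop : Submodule ℝ (Rd s) := (Vmax ⊓ Lsub) ⊓ (LinearMap.ker (innerSL ℝ y₀ : Rd s →ₗ[ℝ] ℝ)) with hStop
  have hStopwit : ∀ x ∈ K, ∀ s' ∈ Stop, x + s' ∈ K := by
    intro x hx s' hs'
    exact hVwit x hx s' (Submodule.mem_inf.1 (Submodule.mem_inf.1 hs').1).1
  have hStopL : Stop ≤ Lsub := le_trans inf_le_left inf_le_right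
  have hStopy : ∀ s' ∈ Stop, (inner ℝ y₀ s' : ℝ) = 0 := by
    intro s' hs'
    have h1 := (Submodule.mem_inf.1 hs').2
    rw [LinearMap.mem_ker] at h1
    simpa using h1
  have hrel0 : ∀ w' ∈ K, ∃ w ∈ K, tangentConeSeq K w ⊆ tangentConeSeq K w' :=
    fun w' hw' => ⟨w', hw', subset_rfl⟩
  have hrank0 : Module.finrank ℝ (Rd s) ≤ Module.finrank ℝ Stop + s := by
    rw [finrank_euclideanSpace_fin]
    exact Nat.le_add_left s _
  -- the escape handler
  have hesc : ∀ v ∈ K, v ∈ Lsub → (inner ℝ y₀ v : ℝ) = 0 → v ∈ Stopᗮ → v ≠ 0 →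
      (LocallyPolyhedral K v ∨ (∃ u : Rd d, A u ∈ K ∧
        A u ∉ Lsp K ∧ (inner ℝ g u : ℝ) = 0 ∧
        -g ∈ regNormal Tlin u ∧ ¬ LocallyPolyhedral K (A u))) := by
    intro v hvK hvL hvy hvperp hvne
    by_cases hLP : LocallyPolyhedral K v
    · exact Or.inl hLP
    · right
      obtain ⟨u, hu⟩ : ∃ u, A u = v := LinearMap.mem_range.1 hvL
      have hgu : (inner ℝ (-g) u : ℝ) = 0 := by
        have h1 : (inner ℝ (-g) u : ℝ) = inner ℝ y₀ v := by
          rw [← hy₀, ContinuousLinearMap.adjoint_inner_left, hu]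
        rw [h1, hvy]
      refine ⟨u, by rw [hu]; exact hvK, ?_, ?_, ?_, ?_⟩
      · rw [hu]
        rintro ⟨L', hL'wit, hvL'⟩
        have hle := hVmaxmax L' hL'wit
        have hvStop : v ∈ Stop := by
          refine Submodule.mem_inf.2 ⟨Submodule.mem_inf.2 ⟨hle hvL', hvL⟩, ?_⟩
          rw [LinearMap.mem_ker]
          simpa using hvy
        have h2 := (Submodule.mem_orthogonal _ _).1 hvperp v hvStop
        exact hvne (inner_self_eq_zero.1 h2)
      · rw [inner_neg_left] at hgu
        linarith
      · refine ⟨(hTlinmem u).2 (by rw [hu]; exact hvK), ?_⟩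
        intro p hp
        obtain ⟨t, wk, ht0, htl, hwl, hm⟩ := hp
        have hkey : ∀ k, (inner ℝ (-g) (wk k) : ℝ) ≤ 0 := by
          intro k
          have h2 := hvpolar _ (hm k)
          rw [inner_add_right, real_inner_smul_right, hgu, zero_add] at h2
          nlinarith [ht0 k]
        have hlim : Tendsto (fun k => (inner ℝ (-g) (wk k) : ℝ)) atTop (nhds (inner ℝ (-g) p)) :=
          Tendsto.inner tendsto_const_nhds hwl
        exact le_of_tendsto hlim (Eventually.of_forall hkey)
      · rw [hu]; exact hLP
  -- run the recursion
  rcases main_recursion Lsub y₀ M₀ K (∃ u : Rd d, A u ∈ K ∧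
        A u ∉ Lsp K ∧ (inner ℝ g u : ℝ) = 0 ∧
        -g ∈ regNormal Tlin u ∧ ¬ LocallyPolyhedral K (A u))
      s K Stop hKclosed hK0 hKcone hStopwit hStopL hStopy hinv hrel0 hrank0 hesc with h | h
  · obtain ⟨w, hw, y, hyorth, hypolar⟩ := h
    left
    refine ⟨w, hw, y, ⟨hw, hypolar⟩, ?_⟩
    have h1 : ContinuousLinearMap.adjoint A (y - y₀) = 0 :=
      adjoint_eq_zero_of_mem_orth A hyorth
    rw [map_sub] at h1
    have h2 : ContinuousLinearMap.adjoint A y = -g := by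
      rw [sub_eq_zero.1 h1, hy₀]
    rw [h2]
    exact add_neg_cancel g
  · right
    exact h
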